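/- Let P_{XY} be a distribution over {0,1} × Y. There exists a conditional distribution P_{B|XY} over {0,1} such that Pr[B=1] ≤ PredAdv(X | Y) and, for every function f : Y → {0,1} with Pr[B=0]>0, Pr[f(Y)=X | B=0] = 1/2. -/

import Mathlib

open Finset

/-- Maximal bit-prediction advantage of `X` from `Z` for a joint distribution
`P` on `ZMod 2 × Z`: `2 · max_f Pr[f(Z) = X] − 1`. -/
noncomputable def predAdv {Z : Type*} [Fintype Z] (P : ZMod 2 × Z → ℝ) : ℝ :=
  2 * (⨆ f : Z → ZMod 2, ∑ z, P (f z, z)) - 1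

/-- There is a conditional distribution `P_{B∣XY}` (given by the probability
`β (x,y)` of `B = 1`) with `Pr[B=1] ≤ PredAdv(X∣Y)` such that conditioned on
`B = 0` no function `f` predicts `X` from `Y` with any advantage. -/
theorem stmt_5 {Y : Type*} [Fintype Y]
    (P : ZMod 2 × Y → ℝ)
    (hP : ∀ a, 0 ≤ P a) (hPs : ∑ a, P a = 1) :
    ∃ β : ZMod 2 × Y → ℝ, (∀ a, 0 ≤ β a) ∧ (∀ a, β a ≤ 1) ∧
      (∑ a, P a * β a) ≤ predAdv P ∧
      ∀ f : Y → ZMod 2, 0 < ∑ a, P a * (1 - β a) →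
        (∑ y, P (f y, y) * (1 - β (f y, y))) / (∑ a, P a * (1 - β a)) = 1/2 := by
  classical
  set m : Y → ℝ := fun y => min (P (0, y)) (P (1, y)) with hm
  have hm0 : ∀ y, 0 ≤ m y := fun y => le_min (hP _) (hP _)
  have hmle : ∀ (x : ZMod 2) (y : Y), m y ≤ P (x, y) := by
    intro x y
    fin_cases x
    · exact min_le_left _ _
    · exact min_le_right _ _
  set β : ZMod 2 × Y → ℝ := fun a => if P a = 0 then 1 else 1 - m a.2 / P a with hβ
  have hkey : ∀ a : ZMod 2 × Y, P a * (1 - β a) = m a.2 := by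
    intro a
    by_cases h : P a = 0
    · have h1 : m a.2 ≤ (0:ℝ) := h ▸ hmle a.1 a.2
      have : m a.2 = 0 := le_antisymm h1 (hm0 _)
      simp [hβ, h, this]
    · simp only [hβ, h, if_false]
      field_simp
      ring
  have hsum : ∑ a : ZMod 2 × Y, P a * (1 - β a) = 2 * ∑ y, m y := by
    simp only [hkey]
    rw [Fintype.sum_prod_type]
    rw [show (Finset.univ : Finset (ZMod 2)) = {0, 1} by decide]
    rw [Finset.sum_insert (by decide), Finset.sum_singleton]
    ring
  refine ⟨β, ?_, ?_, ?_, ?_⟩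
  · intro a
    by_cases h : P a = 0
    · simp [hβ, h]
    · have hpos : 0 < P a := lt_of_le_of_ne (hP a) (Ne.symm h)
      simp only [hβ, h, if_false, sub_nonneg]
      rw [div_le_one hpos]
      exact hmle a.1 a.2
  · intro a
    by_cases h : P a = 0
    · simp [hβ, h]
    · have hpos : 0 < P a := lt_of_le_of_ne (hP a) (Ne.symm h)
      have : 0 ≤ m a.2 / P a := div_nonneg (hm0 _) hpos.le
      simp only [hβ, h, if_false]
      linarith
  · -- predAdv bound
    have h1 : ∑ a : ZMod 2 × Y, P a * β a = 1 - 2 * ∑ y, m y := by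
      have h2 : ∑ a : ZMod 2 × Y, P a * (1 - β a)
          = ∑ a, P a - ∑ a, P a * β a := by
        rw [← Finset.sum_sub_distrib]
        congr 1; ext a; ring
      rw [hsum, hPs] at h2
      linarith
    rw [h1]
    set g : Y → ZMod 2 := fun y => if P (1, y) ≤ P (0, y) then 0 else 1 with hg
    have hgmax : ∀ y, P (g y, y) = max (P (0, y)) (P (1, y)) := by
      intro y
      by_cases h : P (1, y) ≤ P (0, y)
      · simp [hg, h, max_eq_left h]
      · simp [hg, h, max_eq_right (le_of_not_ge h)]
    have hminmax : ∀ y, max (P (0, y)) (P (1, y)) = P (0, y) + P (1, y) - m y := by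
      intro y
      rw [hm]
      rcases le_total (P (0, y)) (P (1, y)) with h | h
      · rw [max_eq_right h]; simp [min_eq_left h]
      · rw [max_eq_left h]; simp [min_eq_right h]
    have hPssplit : ∑ y, (P (0, y) + P (1, y)) = 1 := by
      rw [← hPs, Fintype.sum_prod_type]
      rw [show (Finset.univ : Finset (ZMod 2)) = {0, 1} by decide]
      rw [Finset.sum_insert (by decide), Finset.sum_singleton, ← Finset.sum_add_distrib]
    have hgval : ∑ y, P (g y, y) = 1 - ∑ y, m y := by
      calc ∑ y, P (g y, y) = ∑ y, (P (0, y) + P (1, y) - m y) := by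
            simp only [hgmax, hminmax]
        _ = ∑ y, (P (0, y) + P (1, y)) - ∑ y, m y := Finset.sum_sub_distrib _ _
        _ = 1 - ∑ y, m y := by rw [hPssplit]
    have hle : ∑ y, P (g y, y) ≤ ⨆ f : Y → ZMod 2, ∑ z, P (f z, z) :=
      le_ciSup (f := fun f : Y → ZMod 2 => ∑ z, P (f z, z)) (Set.Finite.bddAbove (Set.finite_range _)) g
    unfold predAdv
    rw [hgval] at hle
    linarith
  · intro f hfpos
    rw [hsum] at hfpos ⊢
    have h3 : ∑ y, P (f y, y) * (1 - β (f y, y)) = ∑ y, m y := by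
      apply Finset.sum_congr rfl
      intro y _
      exact hkey (f y, y)
    rw [h3]
    have hS : (0:ℝ) < ∑ y, m y := by linarith
    field_simp
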